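/- Let κ_m = 1, κ_c = 1, κ_s = −(−1 + iδ) = 1 − iδ with loss parameter δ ∈ (0,1), and 0 < ρ < 1. Then there exist constants c₁, c₂ > 0 independent of n and δ such that c₁ n²(δ² + ρ^{2n+1}) ≤ |(n²+n)(κ_s−κ_c)(κ_s−κ_m) − ρ^{2n+1}((n+1)κ_s + nκ_c)((n+1)κ_m + nκ_s)| ≤ c₂ n²(δ² + ρ^{2n+1}) for all n ≥ 1. -/

import Mathlib

/-- With `κ_m = κ_c = 1`, `κ_s = 1 − iδ`, the determinant
`D_n = (n²+n)(κ_s−κ_c)(κ_s−κ_m) − ρ^{2n+1}((n+1)κ_s + nκ_c)((n+1)κ_m + nκ_s)`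
satisfies `|D_n| ≍ n²(δ² + ρ^{2n+1})` with constants independent of `n ≥ 1` and `δ ∈ (0,1)`. -/
theorem statement12 (ρ : ℝ) (h0 : 0 < ρ) (h1 : ρ < 1) :
    ∃ c₁ c₂ : ℝ, 0 < c₁ ∧ 0 < c₂ ∧
      ∀ δ : ℝ, 0 < δ → δ < 1 → ∀ n : ℕ, 1 ≤ n →
        c₁ * n ^ 2 * (δ ^ 2 + ρ ^ (2 * n + 1)) ≤
          ‖((n : ℂ) ^ 2 + n) * ((1 - δ * Complex.I) - 1)
              * ((1 - δ * Complex.I) - 1)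
            - (ρ : ℂ) ^ (2 * n + 1)
              * (((n : ℂ) + 1) * (1 - δ * Complex.I) + n * 1)
              * (((n : ℂ) + 1) * 1 + n * (1 - δ * Complex.I))‖
        ∧ ‖((n : ℂ) ^ 2 + n) * ((1 - δ * Complex.I) - 1)
              * ((1 - δ * Complex.I) - 1)
            - (ρ : ℂ) ^ (2 * n + 1)
              * (((n : ℂ) + 1) * (1 - δ * Complex.I) + n * 1)
              * (((n : ℂ) + 1) * 1 + n * (1 - δ * Complex.I))‖
          ≤ c₂ * n ^ 2 * (δ ^ 2 + ρ ^ (2 * n + 1)) := by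
  have hρ3 : ρ ^ 3 < 1 := pow_lt_one₀ h0.le h1 (by norm_num)
  refine ⟨min (1 - ρ ^ 3) 4, 20, lt_min (by linarith) (by norm_num), by norm_num, ?_⟩
  intro δ hδ0 hδ1 n hn
  have hN : (1 : ℝ) ≤ (n : ℝ) := by exact_mod_cast hn
  set N : ℝ := (n : ℝ) with hNdef
  set r : ℝ := ρ ^ (2 * n + 1) with hrdef
  have hr0 : 0 < r := pow_pos h0 _
  have hrρ : r ≤ ρ ^ 3 := pow_le_pow_of_le_one h0.le h1.le (by omega)
  have hr1 : r < 1 := lt_of_le_of_lt hrρ hρ3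
  set A : ℝ := -((N ^ 2 + N) * δ ^ 2 * (1 - r)) - r * (2 * N + 1) ^ 2 with hA
  set B : ℝ := r * (2 * N + 1) ^ 2 * δ with hB
  have key : (((n : ℂ) ^ 2 + n) * ((1 - δ * Complex.I) - 1)
              * ((1 - δ * Complex.I) - 1)
            - (ρ : ℂ) ^ (2 * n + 1)
              * (((n : ℂ) + 1) * (1 - δ * Complex.I) + n * 1)
              * (((n : ℂ) + 1) * 1 + n * (1 - δ * Complex.I)))
      = (A : ℂ) + (B : ℂ) * Complex.I := by
    rw [hA, hB, hrdef, hNdef]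
    push_cast
    linear_combination (((n : ℂ) ^ 2 + (n : ℂ)) * (δ : ℂ) ^ 2
      - (ρ : ℂ) ^ (2 * n + 1) * ((n : ℂ) + 1) * (n : ℂ) * (δ : ℂ) ^ 2) * Complex.I_sq
  rw [key, Complex.norm_add_mul_I]
  have hAneg : A ≤ 0 := by
    rw [hA]
    nlinarith [mul_nonneg (mul_nonneg (by nlinarith : (0:ℝ) ≤ N ^ 2 + N) (sq_nonneg δ)) (by linarith : (0:ℝ) ≤ 1 - r), mul_nonneg hr0.le (sq_nonneg (2 * N + 1))]
  have hB0 : 0 ≤ B := by rw [hB]; positivity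
  constructor
  · have h1' : min (1 - ρ ^ 3) 4 * N ^ 2 * (δ ^ 2 + r) ≤ -A := by
      have hm1 : min (1 - ρ ^ 3) 4 ≤ 1 - ρ ^ 3 := min_le_left _ _
      have hm2 : min (1 - ρ ^ 3) 4 ≤ 4 := min_le_right _ _
      rw [hA]
      nlinarith [sq_nonneg δ, mul_pos hr0 hδ0, sq_nonneg (N - 1), sq_nonneg N,
        mul_nonneg (sq_nonneg N) (sq_nonneg δ), mul_nonneg hr0.le (sq_nonneg N)]
    have h2' : -A ≤ Real.sqrt (A ^ 2 + B ^ 2) := by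
      have : |A| ≤ Real.sqrt (A ^ 2 + B ^ 2) := by
        rw [← Real.sqrt_sq_eq_abs]
        exact Real.sqrt_le_sqrt (by nlinarith [sq_nonneg B])
      calc -A ≤ |A| := neg_le_abs A
        _ ≤ _ := this
    linarith
  · have h2' : Real.sqrt (A ^ 2 + B ^ 2) ≤ -A + B := by
      rw [show A ^ 2 + B ^ 2 = (-A) ^ 2 + B ^ 2 by ring]
      have h := Real.sqrt_le_sqrt (show (-A) ^ 2 + B ^ 2 ≤ (-A + B) ^ 2 by
        nlinarith [mul_nonneg (neg_nonneg.2 hAneg) hB0])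
      rwa [Real.sqrt_sq (by linarith)] at h
    have h3' : -A + B ≤ 20 * N ^ 2 * (δ ^ 2 + r) := by
      rw [hA, hB]
      nlinarith [sq_nonneg (N - 1), mul_nonneg hr0.le (sq_nonneg (N - 1)),
        mul_nonneg (mul_nonneg hr0.le (sq_nonneg (N-1))) hδ0.le,
        mul_nonneg hr0.le (mul_nonneg (sq_nonneg N) hδ0.le),
        mul_nonneg (mul_nonneg hr0.le hδ0.le) (by linarith : (0:ℝ) ≤ N),
        mul_nonneg (sq_nonneg N) (sq_nonneg δ), mul_pos hr0 hδ0]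
    linarith
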